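/- Let (Ω, ℱ, ℙ) be a probability space, let λ > 0, and let Q ≥ 1 be a natural number. Let N : Ω → ℕ have law the Poisson distribution with rate λ, and let (X_i)_{i∈ℕ} be real-valued identically distributed random variables with E[ |X_0|^Q ] < ∞, such that the family consisting of N together with all the X_i is independent. Then the compound sum S = ∑_{i=0}^{N-1} X_i satisfies E[ |S|^Q ] < ∞. -/

import Mathlib

open MeasureTheory ProbabilityTheory
open scoped ENNReal NNReal

/-- The index family for the joint independence of a counting variable `N : Ω → ℕ`
(at index `none`) together with a sequence of `E`-valued variables (at indices `some i`). -/
abbrev NXFam (E : Type*) : Option ℕ → Type _ :=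
  fun o => match o with
  | none => ULift ℕ
  | some _ => E

/-- The canonical measurable space structures on `NXFam E`. -/
def NXFamMeas (E : Type*) [MeasurableSpace E] : ∀ o, MeasurableSpace (NXFam E o) :=
  fun o => match o with
  | none => inferInstance
  | some _ => inferInstance

/-- The family of random variables consisting of `N` (at index `none`) and the `X i`
(at indices `some i`). -/
def NXFun {Ω E : Type*} (N : Ω → ℕ) (X : ℕ → Ω → E) : ∀ o, Ω → NXFam E o :=
  fun o => match o with
  | none => fun ω => ULift.up (N ω)
  | some i => X i

/-- A compound Poisson sum with summands having a finite `Q`-th absolute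
moment has a finite `Q`-th absolute moment: if `N` is Poisson with rate `λ`, the `X i` are
identically distributed real random variables with `E[|X 0|^Q] < ∞`, and the family
`{N} ∪ {X i}` is independent, then `E[|∑_{i<N} X i|^Q] < ∞`. -/
theorem stmt_6 {Ω : Type*} [MeasurableSpace Ω] (P : Measure Ω) [IsProbabilityMeasure P]
    (lam : NNReal) (hlam : 0 < lam) (Q : ℕ) (hQ : 1 ≤ Q)
    (N : Ω → ℕ) (hN : Measurable N) (hNlaw : P.map N = poissonMeasure lam)
    (X : ℕ → Ω → ℝ) (hX : ∀ i, Measurable (X i))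
    (hident : ∀ i, P.map (X i) = P.map (X 0))
    (hmom : Integrable (fun ω => |X 0 ω| ^ Q) P)
    (hindep : iIndepFun (m := NXFamMeas ℝ) (NXFun N X) P) :
    Integrable (fun ω => |∑ i ∈ Finset.range (N ω), X i ω| ^ Q) P := by
  obtain ⟨q, rfl⟩ : ∃ q, Q = q + 1 := ⟨Q - 1, (Nat.succ_pred_eq_of_pos hQ).symm⟩
  set g : Ω → ℝ := fun ω => ∑ i ∈ Finset.range (N ω), X i ω with hg_def
  have hgm : Measurable g := by
    have h : Measurable (fun p : Ω × ℕ => ∑ i ∈ Finset.range p.2, X i p.1) :=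
      measurable_from_prod_countable_left fun n => by
        simpa using Finset.measurable_sum (Finset.range n) (fun i _ => hX i)
    exact h.comp (measurable_id.prodMk hN)
  set ψ : ℝ → ℝ≥0∞ := fun x => ENNReal.ofReal (|x| ^ (q + 1)) with hψ_def
  have hψm : Measurable ψ :=
    ENNReal.measurable_ofReal.comp ((continuous_abs.measurable).pow_const _)
  set M : ℝ≥0∞ := ∫⁻ ω, ψ (X 0 ω) ∂P with hM_def
  have hMlt : M < ⊤ := by
    have h2 := hmom.2
    rwa [hasFiniteIntegral_iff_ofReal (Filter.Eventually.of_forall fun ω => by positivity)] at h2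
  have hMi : ∀ i, ∫⁻ ω, ψ (X i ω) ∂P = M := by
    intro i
    rw [hM_def, ← lintegral_map hψm (hX i), hident i, lintegral_map hψm (hX 0)]
  set p : ℕ → ℝ≥0∞ := fun n => ENNReal.ofReal (poissonPMFReal lam n) with hp_def
  have hpn : ∀ n, P (N ⁻¹' {n}) = p n := by
    intro n
    rw [← Measure.map_apply hN (measurableSet_singleton n), hNlaw,
      poissonMeasure_singleton]
    rfl
  -- independence factorization
  have key : ∀ n i, (∫⁻ ω, (if N ω = n then (1 : ℝ≥0∞) else 0) * ψ (X i ω) ∂P) = p n * M := by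
    intro n i
    set φ : ULift ℕ → ℝ≥0∞ := fun m => if m.down = n then 1 else 0 with hφ_def
    have hφm : Measurable φ := measurable_of_countable _
    have hIndep : IndepFun (NXFun N X none) (NXFun N X (some i)) P :=
      hindep.indepFun (by simp)
    have h2 : IndepFun (φ ∘ (NXFun N X none)) (ψ ∘ (NXFun N X (some i))) P :=
      hIndep.comp hφm hψm
    have hfm : Measurable (φ ∘ (NXFun N X none)) := hφm.comp (measurable_up.comp hN)
    have hgm2 : Measurable (ψ ∘ (NXFun N X (some i))) := hψm.comp (hX i)
    have := lintegral_mul_eq_lintegral_mul_lintegral_of_indepFun hfm hgm2 h2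
    have hind : (∫⁻ ω, (φ ∘ NXFun N X none) ω ∂P) = p n := by
      have : (φ ∘ NXFun N X none) = (N ⁻¹' {n}).indicator (fun _ => 1) := by
        ext ω
        by_cases h : N ω = n <;> simp [φ, NXFun, Set.indicator_apply, Set.mem_preimage, h]
      rw [this, lintegral_indicator (hN (measurableSet_singleton n))]
      simp [hpn n]
    calc (∫⁻ ω, (if N ω = n then (1 : ℝ≥0∞) else 0) * ψ (X i ω) ∂P)
        = ∫⁻ ω, ((φ ∘ NXFun N X none) * (ψ ∘ NXFun N X (some i))) ω ∂P := by
          apply lintegral_congr; intro ω; rfl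
      _ = (∫⁻ ω, (φ ∘ NXFun N X none) ω ∂P) * ∫⁻ ω, (ψ ∘ NXFun N X (some i)) ω ∂P := this
      _ = p n * M := by rw [hind]; congr 1; exact hMi i
  -- measurability of per-n terms
  have hterm_meas : ∀ n, Measurable (fun ω =>
      (if N ω = n then (1 : ℝ≥0∞) else 0) *
        ((n : ℝ≥0∞) ^ q * ∑ i ∈ Finset.range n, ψ (X i ω))) := by
    intro n
    have h1 : Measurable (fun ω => if N ω = n then (1 : ℝ≥0∞) else 0) :=
      Measurable.ite (hN (measurableSet_singleton n)) measurable_const measurable_const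
    exact h1.mul (measurable_const.mul
      (Finset.measurable_sum _ (fun i _ => hψm.comp (hX i))))
  constructor
  · exact (hgm.abs.pow_const _).aestronglyMeasurable
  rw [hasFiniteIntegral_iff_ofReal (Filter.Eventually.of_forall fun ω => by positivity)]
  -- tail sum finiteness
  have tail : ∑' n : ℕ, (n : ℝ≥0∞) ^ (q + 1) * p n < ⊤ := by
    have hsum : Summable (fun n : ℕ =>
        Real.exp (-lam) * (((2 : ℝ) ^ (q + 1) * lam) ^ n / n.factorial)) :=
      (Real.summable_pow_div_factorial ((2 : ℝ) ^ (q + 1) * lam)).mul_left _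
    calc ∑' n : ℕ, (n : ℝ≥0∞) ^ (q + 1) * p n
        ≤ ∑' n : ℕ, ENNReal.ofReal
            (Real.exp (-lam) * (((2 : ℝ) ^ (q + 1) * lam) ^ n / n.factorial)) := by
          apply ENNReal.tsum_le_tsum; intro n
          have h1 : ((n : ℝ≥0∞)) ^ (q + 1) = ENNReal.ofReal ((n : ℝ) ^ (q + 1)) := by
            simp [ENNReal.ofReal_pow]
          rw [h1, hp_def, ← ENNReal.ofReal_mul (by positivity)]
          apply ENNReal.ofReal_le_ofReal
          have hle : ((n : ℝ)) ^ (q + 1) ≤ ((2 : ℝ) ^ (q + 1)) ^ n := by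
            calc ((n : ℝ)) ^ (q + 1) ≤ ((2 ^ n : ℕ) : ℝ) ^ (q + 1) := by
                  gcongr; exact_mod_cast (Nat.lt_two_pow_self (n := n)).le
              _ = ((2 : ℝ) ^ (q + 1)) ^ n := by
                  push_cast; rw [← pow_mul, ← pow_mul, Nat.mul_comm]
          rw [poissonPMFReal, mul_pow]
          calc (n : ℝ) ^ (q + 1) * (Real.exp (-lam) * (lam : ℝ) ^ n / n.factorial)
              ≤ ((2 : ℝ) ^ (q + 1)) ^ n * (Real.exp (-lam) * (lam : ℝ) ^ n / n.factorial) := by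
                gcongr
            _ = Real.exp (-lam) * (((2 : ℝ) ^ (q + 1)) ^ n * (lam : ℝ) ^ n / n.factorial) := by
                ring
      _ = ENNReal.ofReal (∑' n : ℕ,
            Real.exp (-lam) * (((2 : ℝ) ^ (q + 1) * lam) ^ n / n.factorial)) :=
          (ENNReal.ofReal_tsum_of_nonneg (fun n => by positivity) hsum).symm
      _ < ⊤ := ENNReal.ofReal_lt_top
  calc ∫⁻ ω, ENNReal.ofReal (|g ω| ^ (q + 1)) ∂P
      ≤ ∫⁻ ω, ∑' n : ℕ, (if N ω = n then (1 : ℝ≥0∞) else 0) *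
          ((n : ℝ≥0∞) ^ q * ∑ i ∈ Finset.range n, ψ (X i ω)) ∂P := by
        apply lintegral_mono; intro ω
        dsimp only
        rw [tsum_eq_single (N ω) (by intro b hb; simp [Ne.symm hb]), if_pos rfl, one_mul]
        calc ENNReal.ofReal (|g ω| ^ (q + 1))
            ≤ ENNReal.ofReal ((N ω : ℝ) ^ q * ∑ i ∈ Finset.range (N ω), |X i ω| ^ (q + 1)) := by
              apply ENNReal.ofReal_le_ofReal
              calc |g ω| ^ (q + 1)
                  ≤ (∑ i ∈ Finset.range (N ω), |X i ω|) ^ (q + 1) :=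
                    pow_le_pow_left₀ (abs_nonneg _) (Finset.abs_sum_le_sum_abs _ _) _
                _ ≤ (N ω : ℝ) ^ q * ∑ i ∈ Finset.range (N ω), |X i ω| ^ (q + 1) := by
                    simpa using pow_sum_le_card_mul_sum_pow (s := Finset.range (N ω))
                      (f := fun i => |X i ω|) (fun i _ => abs_nonneg _) q
          _ = (N ω : ℝ≥0∞) ^ q * ∑ i ∈ Finset.range (N ω), ψ (X i ω) := by
              rw [ENNReal.ofReal_mul (by positivity),
                ENNReal.ofReal_sum_of_nonneg (fun i _ => by positivity)]
              congr 1
              simp [ENNReal.ofReal_pow]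
    _ = ∑' n : ℕ, ∫⁻ ω, (if N ω = n then (1 : ℝ≥0∞) else 0) *
          ((n : ℝ≥0∞) ^ q * ∑ i ∈ Finset.range n, ψ (X i ω)) ∂P :=
        lintegral_tsum (fun n => (hterm_meas n).aemeasurable)
    _ = ∑' n : ℕ, (n : ℝ≥0∞) ^ q * ∑ i ∈ Finset.range n, (p n * M) := by
        congr 1; funext n
        calc ∫⁻ ω, (if N ω = n then (1 : ℝ≥0∞) else 0) *
              ((n : ℝ≥0∞) ^ q * ∑ i ∈ Finset.range n, ψ (X i ω)) ∂P
            = ∫⁻ ω, (n : ℝ≥0∞) ^ q * ∑ i ∈ Finset.range n,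
                (if N ω = n then (1 : ℝ≥0∞) else 0) * ψ (X i ω) ∂P := by
              apply lintegral_congr; intro ω
              simp only [Finset.mul_sum]
              exact Finset.sum_congr rfl fun i _ => by ring
          _ = (n : ℝ≥0∞) ^ q * ∑ i ∈ Finset.range n,
                ∫⁻ ω, (if N ω = n then (1 : ℝ≥0∞) else 0) * ψ (X i ω) ∂P := by
              have hm : ∀ i, Measurable (fun ω =>
                  (if N ω = n then (1 : ℝ≥0∞) else 0) * ψ (X i ω)) := fun i => by
                have hs : MeasurableSet {ω | N ω = n} := hN (measurableSet_singleton n)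
                exact (Measurable.ite hs measurable_const measurable_const).mul
                  (hψm.comp (hX i))
              rw [lintegral_const_mul' _ _ (ENNReal.pow_ne_top (ENNReal.natCast_ne_top n)),
                lintegral_finset_sum _ (fun i _ => hm i)]
          _ = (n : ℝ≥0∞) ^ q * ∑ i ∈ Finset.range n, (p n * M) := by
              congr 1; exact Finset.sum_congr rfl fun i _ => key n i
    _ = M * ∑' n : ℕ, (n : ℝ≥0∞) ^ (q + 1) * p n := by
        rw [← ENNReal.tsum_mul_left]
        congr 1; funext n
        simp only [Finset.sum_const, Finset.card_range, nsmul_eq_mul]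
        rw [pow_succ]
        ring
    _ < ⊤ := ENNReal.mul_lt_top hMlt tail
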